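/- For any pair of positive integers (m, n_r) with m < n_r, there exists an m × n_r matrix G with entries in the field with two elements whose rows are linearly independent (full row-rank), such that for every k ∈ {1, …, n_r}, the number of vectors x in the row space of G (the span over GF(2) of the rows of G) with Hamming weight exactly k is at most 2 · n_r · 2^{m − n_r} · C(n_r, k), where C(n_r, k) is the binomial coefficient. -/

import Mathlib

open Finset

private lemma zmod2_cases_aux (a : ZMod 2) : a = 0 ∨ a = 1 := by revert a; decide

private lemma weight_count_aux (nr k : ℕ) :
    (univ.filter fun x : Fin nr → ZMod 2 => (univ.filter fun j => x j ≠ 0).card = k).card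
      = nr.choose k := by
  have hpc : (Finset.powersetCard k (univ : Finset (Fin nr))).card = nr.choose k := by
    simp [Finset.card_powersetCard]
  rw [← hpc]
  apply Finset.card_bij (fun x _ => univ.filter fun j => x j ≠ 0)
  · intro x hx
    simp only [mem_filter, mem_univ, true_and] at hx
    simp [Finset.mem_powersetCard, hx]
  · intro x hx y hy h
    funext j
    have hj := Finset.ext_iff.mp h j
    simp only [mem_filter, mem_univ, true_and] at hj
    rcases zmod2_cases_aux (x j) with h1 | h1 <;> rcases zmod2_cases_aux (y j) with h2 | h2 <;>
      simp_all
  · intro s hs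
    simp only [Finset.mem_powersetCard] at hs
    have hfil : (univ.filter fun j => (if j ∈ s then (1:ZMod 2) else 0) ≠ 0) = s := by
      ext j; by_cases h : j ∈ s <;> simp [h]
    refine ⟨fun j => if j ∈ s then 1 else 0, ?_, hfil⟩
    simp only [mem_filter, mem_univ, true_and, hfil, hs.2]

private lemma flip_aux {nr : ℕ} (x : Fin nr → ZMod 2) (hx : x ≠ 0) :
    ∃ (i : Fin nr) (e : (Fin nr → ZMod 2) ≃ₗ[ZMod 2] (Fin nr → ZMod 2)),
      e x = Pi.single i 1 ∧ e (Pi.single i 1) = x := by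
  obtain ⟨i, hi⟩ : ∃ i, x i ≠ 0 := by
    by_contra h; push_neg at h; exact hx (funext h)
  have hxi : x i = 1 := (zmod2_cases_aux (x i)).resolve_left hi
  set w : Fin nr → ZMod 2 := x + Pi.single i 1 with hw
  have hwi : w i = 0 := by
    simp [hw, hxi]
    rfl
  set f : (Fin nr → ZMod 2) →ₗ[ZMod 2] (Fin nr → ZMod 2) :=
    LinearMap.id + (LinearMap.proj i).smulRight w with hf
  have hfv : ∀ v, f v = v + v i • w := by intro v; rfl
  have hinv : Function.Involutive f := by
    intro v
    rw [hfv, hfv]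
    have h1 : (v + v i • w) i = v i := by
      simp [hwi]
    rw [h1, add_assoc, ← add_smul, CharTwo.add_self_eq_zero, zero_smul, add_zero]
  refine ⟨i, LinearEquiv.ofInvolutive f hinv, ?_, ?_⟩
  · show f x = _
    rw [hfv, hxi, one_smul, hw, ← add_assoc]
    have : x + x = 0 := by ext t; exact CharTwo.add_self_eq_zero _
    rw [this, zero_add]
  · show f (Pi.single i 1) = _
    rw [hfv]
    simp only [Pi.single_eq_same, one_smul, hw]
    rw [add_comm x, ← add_assoc]
    have : (Pi.single i 1 : Fin nr → ZMod 2) + Pi.single i 1 = 0 := by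
      ext t; exact CharTwo.add_self_eq_zero _
    rw [this, zero_add]

private lemma exists_flip_aux {nr : ℕ} (x y : Fin nr → ZMod 2) (hx : x ≠ 0) (hy : y ≠ 0) :
    ∃ e : (Fin nr → ZMod 2) ≃ₗ[ZMod 2] (Fin nr → ZMod 2), e x = y := by
  obtain ⟨i, ex, hex, -⟩ := flip_aux x hx
  obtain ⟨j, ey, -, hey⟩ := flip_aux y hy
  refine ⟨(ex.trans (LinearEquiv.funCongrLeft (ZMod 2) (ZMod 2) (Equiv.swap i j))).trans ey, ?_⟩
  simp only [LinearEquiv.trans_apply, hex]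
  have : (LinearEquiv.funCongrLeft (ZMod 2) (ZMod 2) (Equiv.swap i j)) (Pi.single i 1)
      = Pi.single j 1 := by
    ext t
    simp [LinearEquiv.funCongrLeft]
    by_cases h : t = j
    · subst h; rw [Equiv.swap_apply_right]; simp
    · rw [Pi.single_eq_of_ne h]
      have hne : Equiv.swap i j t ≠ i := by
        intro hc
        apply h
        have h2 := congrArg (Equiv.swap i j) hc
        rwa [Equiv.swap_apply_self, Equiv.swap_apply_left] at h2
      rw [Pi.single_eq_of_ne hne]
  rw [this, hey]

private lemma vecMul_eq_sum_aux {m nr : ℕ} (c : Fin m → ZMod 2)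
    (G : Matrix (Fin m) (Fin nr) (ZMod 2)) :
    Matrix.vecMul c G = ∑ i, c i • G i := by
  funext j
  simp [Matrix.vecMul, dotProduct, Finset.sum_apply]

private lemma card_ne_zero_aux (N : ℕ) :
    (univ.filter fun y : Fin N → ZMod 2 => y ≠ 0).card = 2 ^ N - 1 := by
  have h : (univ.filter (fun y : Fin N → ZMod 2 => y ≠ 0)) = univ \ {0} := by
    ext y; simp
  rw [h, Finset.card_sdiff_of_subset (by simp), Finset.card_univ, Finset.card_singleton]
  congr 1
  simp [Fintype.card_fun]

theorem stmt_1 (m nr : ℕ) (hm : 0 < m) (hnr : 0 < nr) (hmn : m < nr) :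
    ∃ G : Matrix (Fin m) (Fin nr) (ZMod 2),
      LinearIndependent (ZMod 2) (fun i => G i) ∧
      ∀ k ∈ Finset.Icc 1 nr,
        (({x : Fin nr → ZMod 2 | x ∈ Submodule.span (ZMod 2) (Set.range G) ∧
            (Finset.univ.filter (fun j => x j ≠ 0)).card = k}.ncard : ℝ)
          ≤ 2 * nr * (2 : ℝ) ^ ((m : ℤ) - (nr : ℤ)) * (nr.choose k)) := by
  classical
  -- weight function
  set wt : (Fin nr → ZMod 2) → ℕ := fun x => (univ.filter fun j => x j ≠ 0).card with hwt
  -- set of full-rank matrices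
  set S : Finset (Matrix (Fin m) (Fin nr) (ZMod 2)) :=
    univ.filter (fun G => LinearIndependent (ZMod 2) (fun i => G i)) with hSdef
  have hS : ∀ G, G ∈ S ↔ LinearIndependent (ZMod 2) (fun i => G i) := by
    intro G; simp [hSdef]
  -- S is nonempty
  have hSne : S.Nonempty := by
    refine ⟨Matrix.of (fun i => Pi.single (Fin.castLE hmn.le i) (1 : ZMod 2)), ?_⟩
    rw [hS]
    have hbi : LinearIndependent (ZMod 2) (fun i : Fin nr => Pi.single i (1 : ZMod 2)) := by
      have h1 := (Pi.basisFun (ZMod 2) (Fin nr)).linearIndependent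
      have h2 : (⇑(Pi.basisFun (ZMod 2) (Fin nr))) = fun i : Fin nr => Pi.single i (1 : ZMod 2) :=
        funext fun i => Pi.basisFun_apply (ZMod 2) (Fin nr) i
      rwa [h2] at h1
    exact hbi.comp (Fin.castLE hmn.le) (Fin.castLE_injective hmn.le)
  -- rows of G ∈ S give injective vecMul, and nonzero images for nonzero c
  have hinj : ∀ G ∈ S, Function.Injective (fun c : Fin m → ZMod 2 => Matrix.vecMul c G) := by
    intro G hG
    rw [hS] at hG
    intro a b hab
    have hab' : Matrix.vecMul a G = Matrix.vecMul b G := hab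
    have h0 : Matrix.vecMul (a - b) G = 0 := by
      rw [Matrix.sub_vecMul, hab', sub_self]
    rw [vecMul_eq_sum_aux] at h0
    have := Fintype.linearIndependent_iff.mp hG (a - b) h0
    funext i
    have hi := this i
    simpa [sub_eq_zero] using hi
  have hne0 : ∀ G ∈ S, ∀ c : Fin m → ZMod 2, c ≠ 0 → Matrix.vecMul c G ≠ 0 := by
    intro G hG c hc h0
    apply hc
    apply hinj G hG
    show Matrix.vecMul c G = Matrix.vecMul 0 G
    rw [h0, Matrix.zero_vecMul]
  -- fibers of vecMul over nonzero targets all have the same cardinality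
  have hfib : ∀ c : Fin m → ZMod 2, ∀ x y : Fin nr → ZMod 2, x ≠ 0 → y ≠ 0 →
      (S.filter fun G => Matrix.vecMul c G = x).card
        = (S.filter fun G => Matrix.vecMul c G = y).card := by
    intro c x y hx hy
    obtain ⟨e, he⟩ := exists_flip_aux x y hx hy
    apply Finset.card_bij' (fun G _ => Matrix.of (fun i => e (G i)))
      (fun G _ => Matrix.of (fun i => e.symm (G i)))
    · intro G hG
      simp only [mem_filter] at hG ⊢
      constructor
      · rw [hS]
        exact (hS G).mp hG.1 |>.map' e.toLinearMap e.ker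
      · rw [vecMul_eq_sum_aux]
        have : ∀ i, (Matrix.of fun i => e (G i)) i = e (G i) := fun _ => rfl
        calc (∑ i, c i • (Matrix.of fun i => e (G i)) i)
            = ∑ i, e (c i • G i) := by
              refine Finset.sum_congr rfl (fun i _ => ?_)
              rw [this, map_smul]
          _ = e (∑ i, c i • G i) := (map_sum e _ _).symm
          _ = y := by rw [← vecMul_eq_sum_aux, hG.2, he]
    · intro G hG
      simp only [mem_filter] at hG ⊢
      constructor
      · rw [hS]
        exact (hS G).mp hG.1 |>.map' e.symm.toLinearMap e.symm.ker
      · rw [vecMul_eq_sum_aux]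
        calc (∑ i, c i • (Matrix.of fun i => e.symm (G i)) i)
            = ∑ i, e.symm (c i • G i) := by
              refine Finset.sum_congr rfl (fun i _ => ?_)
              rw [map_smul]; rfl
          _ = e.symm (∑ i, c i • G i) := (map_sum e.symm _ _).symm
          _ = x := by rw [← vecMul_eq_sum_aux, hG.2, ← he, e.symm_apply_apply]
    · intro G _; ext i j
      show e.symm (e (G i)) j = G i j
      rw [e.symm_apply_apply]
    · intro G _; ext i j
      show e (e.symm (G i)) j = G i j
      rw [e.apply_symm_apply]
  -- each nonzero fiber has size S.card / (2^nr - 1), i.e.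
  have hfibsize : ∀ c : Fin m → ZMod 2, c ≠ 0 → ∀ x : Fin nr → ZMod 2, x ≠ 0 →
      (2 ^ nr - 1) * (S.filter fun G => Matrix.vecMul c G = x).card = S.card := by
    intro c hc x hx
    have hsplit : S.card = ∑ y ∈ univ.filter (fun y : Fin nr → ZMod 2 => y ≠ 0),
        (S.filter fun G => Matrix.vecMul c G = y).card := by
      rw [Finset.card_eq_sum_card_fiberwise
        (f := fun G => Matrix.vecMul c G) (t := univ.filter (fun y => y ≠ 0))]
      intro G hG
      simp only [mem_coe, mem_filter, mem_univ, true_and]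
      exact hne0 G hG c hc
    have hconst : ∀ y ∈ univ.filter (fun y : Fin nr → ZMod 2 => y ≠ 0),
        (S.filter fun G => Matrix.vecMul c G = y).card
          = (S.filter fun G => Matrix.vecMul c G = x).card := by
      intro y hy
      simp only [mem_filter, mem_univ, true_and] at hy
      exact hfib c y x hy hx
    rw [hsplit, Finset.sum_congr rfl hconst, Finset.sum_const, smul_eq_mul,
      card_ne_zero_aux nr]
  -- the counting function
  set A : ℕ → Matrix (Fin m) (Fin nr) (ZMod 2) → ℕ :=
    fun k G => (univ.filter fun c : Fin m → ZMod 2 => wt (Matrix.vecMul c G) = k).card with hA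
  -- double counting
  have hdc : ∀ k ∈ Finset.Icc 1 nr,
      (2 ^ nr - 1) * ∑ G ∈ S, A k G = (2 ^ m - 1) * (nr.choose k * S.card) := by
    intro k hk
    obtain ⟨hk1, hk2⟩ := Finset.mem_Icc.mp hk
    have hswap : ∑ G ∈ S, A k G
        = ∑ c : Fin m → ZMod 2, (S.filter fun G => wt (Matrix.vecMul c G) = k).card := by
      simp only [hA, Finset.card_filter]
      rw [Finset.sum_comm]
    rw [hswap, Finset.mul_sum]
    rw [← Finset.sum_filter_add_sum_filter_not univ (fun c : Fin m → ZMod 2 => c ≠ 0)]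
    have hzero : ∑ c ∈ univ.filter (fun c : Fin m → ZMod 2 => ¬ c ≠ 0),
        (2 ^ nr - 1) * (S.filter fun G => wt (Matrix.vecMul c G) = k).card = 0 := by
      apply Finset.sum_eq_zero
      intro c hc
      simp only [mem_filter, mem_univ, true_and, not_not] at hc
      subst hc
      have : (S.filter fun G => wt (Matrix.vecMul (0 : Fin m → ZMod 2) G) = k) = ∅ := by
        apply Finset.filter_false_of_mem
        intro G _
        rw [Matrix.zero_vecMul]
        have : wt (0 : Fin nr → ZMod 2) = 0 := by simp [hwt]
        omega
      rw [this]
      simp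
    have hmain : ∀ c ∈ univ.filter (fun c : Fin m → ZMod 2 => c ≠ 0),
        (2 ^ nr - 1) * (S.filter fun G => wt (Matrix.vecMul c G) = k).card
          = nr.choose k * S.card := by
      intro c hc
      simp only [mem_filter, mem_univ, true_and] at hc
      have hfibsplit : (S.filter fun G => wt (Matrix.vecMul c G) = k).card
          = ∑ x ∈ univ.filter (fun x : Fin nr → ZMod 2 => wt x = k),
              ((S.filter fun G => wt (Matrix.vecMul c G) = k).filter
                (fun G => Matrix.vecMul c G = x)).card := by
        apply Finset.card_eq_sum_card_fiberwise (f := fun G => Matrix.vecMul c G)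
        intro G hG
        simp only [mem_coe, mem_filter, mem_univ, true_and] at hG ⊢
        exact hG.2
      have hfibeq : ∀ x ∈ univ.filter (fun x : Fin nr → ZMod 2 => wt x = k),
          ((S.filter fun G => wt (Matrix.vecMul c G) = k).filter
            (fun G => Matrix.vecMul c G = x)).card
          = (S.filter (fun G => Matrix.vecMul c G = x)).card := by
        intro x hx
        simp only [mem_filter, mem_univ, true_and] at hx
        congr 1
        rw [Finset.filter_filter]
        apply Finset.filter_congr
        intro G _
        constructor
        · rintro ⟨-, h⟩; exact h
        · intro h; exact ⟨by rw [h, hx], h⟩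
      rw [hfibsplit, Finset.sum_congr rfl hfibeq, Finset.mul_sum]
      have hxne : ∀ x ∈ univ.filter (fun x : Fin nr → ZMod 2 => wt x = k), x ≠ 0 := by
        intro x hx
        simp only [mem_filter, mem_univ, true_and] at hx
        intro h0
        subst h0
        have : wt (0 : Fin nr → ZMod 2) = 0 := by simp [hwt]
        omega
      rw [Finset.sum_congr rfl (fun x hx => hfibsize c hc x (hxne x hx))]
      rw [Finset.sum_const, smul_eq_mul]
      congr 1
      exact weight_count_aux nr k
    rw [hzero, add_zero, Finset.sum_congr rfl hmain, Finset.sum_const, smul_eq_mul,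
      card_ne_zero_aux m]
  -- now the real-valued averaging
  set z : ℝ := (2 : ℝ) ^ ((m : ℤ) - (nr : ℤ)) with hz
  have hzpos : 0 < z := by positivity
  have hzkey : (2 : ℝ) ^ nr * z = 2 ^ m := by
    rw [hz, ← zpow_natCast (2:ℝ) nr, ← zpow_add₀ (by norm_num : (2:ℝ) ≠ 0)]
    rw [← zpow_natCast (2:ℝ) m]
    congr 1
    ring
  have hp1 : (1:ℝ) ≤ 2 ^ nr := one_le_pow₀ (by norm_num)
  have hq1 : (1:ℝ) ≤ 2 ^ m := one_le_pow₀ (by norm_num)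
  have hppos : (0:ℝ) < 2 ^ nr - 1 := by
    have : (2:ℝ) ≤ 2 ^ nr := by
      calc (2:ℝ) = 2 ^ 1 := by norm_num
        _ ≤ 2 ^ nr := by
          apply pow_le_pow_right₀ (by norm_num) hnr
    linarith
  have hratio : ((2:ℝ) ^ m - 1) / (2 ^ nr - 1) ≤ 2 * z := by
    rw [div_le_iff₀ hppos]
    have h2nr : (2:ℝ) ≤ 2 ^ nr := by
      calc (2:ℝ) = 2 ^ 1 := by norm_num
        _ ≤ 2 ^ nr := by
          apply pow_le_pow_right₀ (by norm_num) hnr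
    nlinarith [hzpos, hzkey, h2nr]
  -- sum over S of each A k G (in ℝ)
  have hdcR : ∀ k ∈ Finset.Icc 1 nr,
      ∑ G ∈ S, (A k G : ℝ) / (nr.choose k)
        = ((2:ℝ) ^ m - 1) / (2 ^ nr - 1) * S.card := by
    intro k hk
    obtain ⟨hk1, hk2⟩ := Finset.mem_Icc.mp hk
    have hchoose : 0 < nr.choose k := Nat.choose_pos hk2
    have hchooseR : (0:ℝ) < (nr.choose k : ℝ) := by exact_mod_cast hchoose
    have := hdc k hk
    have hcast : ((2:ℝ) ^ nr - 1) * ∑ G ∈ S, (A k G : ℝ)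
        = ((2:ℝ) ^ m - 1) * ((nr.choose k : ℝ) * S.card) := by
      have h1 : ((2 ^ nr - 1) * ∑ G ∈ S, A k G : ℕ) = ((2 ^ m - 1) * (nr.choose k * S.card) : ℕ) := this
      have h2 := congrArg (fun n : ℕ => (n : ℝ)) h1
      push_cast [Nat.cast_sub (Nat.one_le_two_pow)] at h2
      convert h2 using 2 <;> push_cast <;> ring
    have hsumA : ∑ G ∈ S, (A k G : ℝ)
        = ((2:ℝ) ^ m - 1) * ((nr.choose k : ℝ) * S.card) / ((2:ℝ) ^ nr - 1) := by
      rw [eq_div_iff (ne_of_gt hppos)]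
      linarith [hcast]
    rw [← Finset.sum_div, hsumA]
    field_simp
  -- exists a good G
  have htotal : ∑ G ∈ S, ∑ k ∈ Finset.Icc 1 nr, (A k G : ℝ) / (nr.choose k)
      ≤ ∑ G ∈ S, (2 * nr * z) := by
    rw [Finset.sum_comm, Finset.sum_const, nsmul_eq_mul]
    calc ∑ k ∈ Finset.Icc 1 nr, ∑ G ∈ S, (A k G : ℝ) / (nr.choose k)
        = ∑ k ∈ Finset.Icc 1 nr, ((2:ℝ) ^ m - 1) / (2 ^ nr - 1) * S.card :=
          Finset.sum_congr rfl hdcR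
      _ = (nr : ℝ) * (((2:ℝ) ^ m - 1) / (2 ^ nr - 1) * S.card) := by
          rw [Finset.sum_const, Nat.card_Icc]
          simp
      _ ≤ (nr : ℝ) * ((2 * z) * S.card) := by
          apply mul_le_mul_of_nonneg_left _ (by positivity)
          apply mul_le_mul_of_nonneg_right hratio (by positivity)
      _ = (S.card : ℝ) * (2 * nr * z) := by ring
  obtain ⟨G, hGS, hGgood⟩ := Finset.exists_le_of_sum_le hSne htotal
  refine ⟨G, (hS G).mp hGS, ?_⟩
  intro k hk
  obtain ⟨hk1, hk2⟩ := Finset.mem_Icc.mp hk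
  have hchooseR : (0:ℝ) < (nr.choose k : ℝ) := by
    exact_mod_cast Nat.choose_pos hk2
  -- identify the ncard with A k G
  have hNcard : {x : Fin nr → ZMod 2 | x ∈ Submodule.span (ZMod 2) (Set.range G) ∧
      (Finset.univ.filter (fun j => x j ≠ 0)).card = k}.ncard = A k G := by
    have hspan : ∀ x : Fin nr → ZMod 2,
        x ∈ Submodule.span (ZMod 2) (Set.range G) ↔ ∃ c, Matrix.vecMul c G = x := by
      intro x
      change x ∈ Submodule.span (ZMod 2) (Set.range (Matrix.row G)) ↔ _
      rw [← range_vecMulLinear]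
      constructor
      · rintro ⟨c, rfl⟩; exact ⟨c, rfl⟩
      · rintro ⟨c, rfl⟩; exact ⟨c, rfl⟩
    have hset : {x : Fin nr → ZMod 2 | x ∈ Submodule.span (ZMod 2) (Set.range G) ∧
        (Finset.univ.filter (fun j => x j ≠ 0)).card = k}
        = ↑((univ.filter fun c : Fin m → ZMod 2 => wt (Matrix.vecMul c G) = k).image
            (fun c => Matrix.vecMul c G)) := by
      ext x
      simp only [Set.mem_setOf_eq, Finset.coe_image, Set.mem_image, Finset.mem_coe,
        mem_filter, mem_univ, true_and, hspan]
      constructor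
      · rintro ⟨⟨c, rfl⟩, hwtx⟩
        exact ⟨c, hwtx, rfl⟩
      · rintro ⟨c, hwtc, rfl⟩
        exact ⟨⟨c, rfl⟩, hwtc⟩
    rw [hset, Set.ncard_coe_finset,
      Finset.card_image_of_injOn (Function.Injective.injOn (hinj G hGS))]
  rw [hNcard]
  -- from the sum bound, extract the per-k bound
  have hterm : (A k G : ℝ) / (nr.choose k) ≤ 2 * nr * z := by
    calc (A k G : ℝ) / (nr.choose k)
        ≤ ∑ k' ∈ Finset.Icc 1 nr, (A k' G : ℝ) / (nr.choose k') := by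
          apply Finset.single_le_sum (f := fun k' => (A k' G : ℝ) / (nr.choose k')) _ hk
          intro k' _
          positivity
      _ ≤ 2 * nr * z := hGgood
  rw [div_le_iff₀ hchooseR] at hterm
  exact hterm
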